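/- Let x ∈ R^{d−1} with d ≥ 2, and suppose the dual Diophantine type of x is strictly greater than d. Then for every y ∈ R, the point (x, y) ∈ R^d is very well approximable: there exists ε > 0 such that ‖q(x,y)‖ < q^{−1/d−ε} for infinitely many q ∈ N. -/

import Mathlib

set_option maxHeartbeats 1600000

open scoped Classical ENNReal
open Filter

/-- Sup-norm distance from `x ∈ ℝ^ℓ` to the nearest integer point of `ℤ^ℓ`. -/
noncomputable def distInt {l : ℕ} (x : Fin l → ℝ) : ℝ :=
  ⨅ p : Fin l → ℤ, ‖x - fun i => (p i : ℝ)‖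

/-- Distance from `t ∈ ℝ` to the nearest integer. -/
noncomputable def distZ (t : ℝ) : ℝ := ⨅ p : ℤ, |t - (p : ℝ)|

/-- The dual Diophantine type of `x ∈ ℝ^ℓ`:
`sup {τ > 0 : ‖⟨n,x⟩‖ < |n|_∞^{-τ} for infinitely many n ∈ ℤ^ℓ \ {0}}`,
valued in `ℝ≥0∞` (the sup of the empty set being `0`). -/
noncomputable def tauD {l : ℕ} (x : Fin l → ℝ) : ℝ≥0∞ :=
  ⨆ τ ∈ {τ : ℝ | 0 < τ ∧
    {n : Fin l → ℤ | n ≠ 0 ∧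
      distZ (∑ i, (n i : ℝ) * x i) < ‖fun i => ((n i : ℝ))‖ ^ (-τ)}.Infinite},
    ENNReal.ofReal τ

open Finset MeasureTheory Submodule


lemma distInt_nonneg {l : ℕ} (v : Fin l → ℝ) : 0 ≤ distInt v :=
  Real.iInf_nonneg fun _ => norm_nonneg _

lemma distInt_le {l : ℕ} (v : Fin l → ℝ) (p : Fin l → ℤ) :
    distInt v ≤ ‖v - fun i => (p i : ℝ)‖ :=
  ciInf_le ⟨0, fun _ ⟨q, hq⟩ => hq ▸ norm_nonneg _⟩ p

lemma distZ_le (t : ℝ) (m : ℤ) : distZ t ≤ |t - (m : ℝ)| :=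
  ciInf_le ⟨0, fun _ ⟨q, hq⟩ => hq ▸ abs_nonneg _⟩ m

lemma distZ_le_distInt {l : ℕ} (v : Fin l → ℝ) (i : Fin l) : distZ (v i) ≤ distInt v := by
  apply le_ciInf
  intro p
  calc distZ (v i) ≤ |v i - (p i : ℝ)| := distZ_le _ _
    _ = ‖(v - fun j => (p j : ℝ)) i‖ := by simp [Real.norm_eq_abs]
    _ ≤ ‖v - fun j => (p j : ℝ)‖ := norm_le_pi_norm _ i

lemma distZ_eq_zero {t : ℝ} (h : distZ t = 0) : ∃ m : ℤ, t = m := by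
  have h1 : |t - (round t : ℝ)| ≤ distZ t := le_ciInf fun m => round_le t m
  have h2 : |t - (round t : ℝ)| ≤ 0 := h ▸ h1
  have h3 : t - (round t : ℝ) = 0 := abs_eq_zero.mp (le_antisymm h2 (abs_nonneg _))
  exact ⟨round t, by linarith⟩


lemma bounded_int_finite (l : ℕ) (C : ℝ) :
    {n : Fin l → ℤ | ‖(fun i => (n i : ℝ))‖ ≤ C}.Finite := by
  apply Set.Finite.subset (Set.Finite.pi (fun i : Fin l => Set.finite_Icc (-(⌈C⌉)) ⌈C⌉))
  intro n hn
  simp only [Set.mem_pi, Set.mem_univ, forall_true_left, Set.mem_Icc]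
  intro i
  have h1 : |(n i : ℝ)| ≤ C := by
    have := norm_le_pi_norm (fun j => (n j : ℝ)) i
    rw [Real.norm_eq_abs] at this
    exact this.trans hn
  have h2 : |(n i : ℝ)| ≤ (⌈C⌉ : ℝ) := h1.trans (Int.le_ceil C)
  rw [abs_le] at h2
  exact ⟨by exact_mod_cast h2.1, by exact_mod_cast h2.2⟩

lemma snoc_norm (l : ℕ) (n : Fin l → ℤ) :
    ‖(fun i : Fin (l+1) => ((Fin.snoc n (0:ℤ) : Fin (l+1) → ℤ) i : ℝ))‖
      = ‖(fun i => (n i : ℝ))‖ := by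
  apply le_antisymm
  · apply pi_norm_le_iff_of_nonneg (norm_nonneg _) |>.mpr
    intro j
    induction j using Fin.lastCases with
    | last => simp
    | cast i =>
        simp only [Fin.snoc_castSucc]
        exact norm_le_pi_norm (fun i => (n i : ℝ)) i
  · apply pi_norm_le_iff_of_nonneg (norm_nonneg _) |>.mpr
    intro i
    have := norm_le_pi_norm (fun j : Fin (l+1) =>
      ((Fin.snoc n (0:ℤ) : Fin (l+1) → ℤ) j : ℝ)) i.castSucc
    simpa using this

lemma snoc_sum (l : ℕ) (n : Fin l → ℤ) (x : Fin l → ℝ) (y : ℝ) :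
    ∑ i : Fin (l+1), ((Fin.snoc n (0:ℤ) : Fin (l+1) → ℤ) i : ℝ)
        * (Fin.snoc x y : Fin (l+1) → ℝ) i
      = ∑ i : Fin l, (n i : ℝ) * x i := by
  rw [Fin.sum_univ_castSucc]
  simp


lemma minkowski_forms {N : ℕ} (M : Matrix (Fin N) (Fin N) ℝ) (hdet : M.det ≠ 0)
    (c : Fin N → ℝ) (hc : ∀ j, 0 < c j) (hvol : |M.det| < ∏ j, c j) :
    ∃ v : Fin N → ℤ, v ≠ 0 ∧ ∀ j, |M.mulVec (fun i => (v i : ℝ)) j| ≤ c j := by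
  classical
  set b := Pi.basisFun ℝ (Fin N)
  set L := (span ℤ (Set.range b)).toAddSubgroup with hL
  have fund := ZSpan.isAddFundamentalDomain' b (volume : Measure (Fin N → ℝ))
  set box : Set (Fin N → ℝ) := Set.pi Set.univ fun j => Set.Icc (-(c j)) (c j) with hbox
  set s : Set (Fin N → ℝ) := Matrix.toLin' M ⁻¹' box with hs
  have h_symm : ∀ u ∈ s, -u ∈ s := by
    intro u hu
    simp only [hs, Set.mem_preimage, map_neg] at hu ⊢
    intro j hj
    have := hu j hj
    simp only [Set.mem_Icc, Pi.neg_apply] at this ⊢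
    constructor <;> linarith [this.1, this.2]
  have h_conv : Convex ℝ s :=
    Convex.linear_preimage (convex_pi fun j _ => convex_Icc _ _) _
  have hdetpos : (0:ℝ) < |M.det| := abs_pos.mpr hdet
  have hvolbox : volume box = ENNReal.ofReal (∏ j, (2 * c j)) := by
    rw [hbox, volume_pi_pi]
    rw [ENNReal.ofReal_prod_of_nonneg (fun j _ => by have := hc j; linarith)]
    congr 1; ext j
    rw [Real.volume_Icc]; congr 1; ring
  have hF : volume (ZSpan.fundamentalDomain b) = 1 := by
    rw [ZSpan.fundamentalDomain_pi_basisFun, volume_pi_pi]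
    simp
  have hdet' : LinearMap.det (Matrix.toLin' M) ≠ 0 := by rwa [LinearMap.det_toLin']
  have hvols : volume s = ENNReal.ofReal |(M.det)⁻¹| * volume box := by
    rw [hs, Measure.addHaar_preimage_linearMap volume hdet', LinearMap.det_toLin']
  have hmeas : volume (ZSpan.fundamentalDomain b) * 2 ^ (Module.finrank ℝ (Fin N → ℝ)) <
      volume s := by
    rw [hF, one_mul, hvols, hvolbox, ← ENNReal.ofReal_mul (by positivity)]
    have h2 : (2 : ℝ≥0∞) ^ (Module.finrank ℝ (Fin N → ℝ)) = ENNReal.ofReal (2 ^ N) := by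
      simp [Module.finrank_fintype_fun_eq_card, ENNReal.ofReal_pow]
    rw [h2]
    have hpp : (0:ℝ) < ∏ j, (2 * c j) := Finset.prod_pos (fun j _ => by have := hc j; linarith)
    rw [ENNReal.ofReal_lt_ofReal_iff (mul_pos (abs_pos.mpr (inv_ne_zero hdet)) hpp)]
    have hprod : (∏ j, (2 * c j)) = 2 ^ N * ∏ j, c j := by
      rw [Finset.prod_mul_distrib, Finset.prod_const]
      simp
    rw [hprod, abs_inv]
    rw [inv_mul_eq_div, lt_div_iff₀ hdetpos]
    calc (2:ℝ) ^ N * |M.det| < 2 ^ N * ∏ j, c j := by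
          apply mul_lt_mul_of_pos_left hvol (by positivity)
      _ = (2 ^ N * ∏ j, c j) := rfl
    
  haveI : Countable L := inferInstanceAs (Countable (span ℤ (Set.range ⇑b)))
  obtain ⟨x, hx0, hxs⟩ :=
    exists_ne_zero_mem_lattice_of_measure_mul_two_pow_lt_measure (L := L) fund h_symm h_conv hmeas
  have hxmem : (x : Fin N → ℝ) ∈ span ℤ (Set.range b) := x.2
  have hcoord : ∀ i, ∃ z : ℤ, (z : ℝ) = (x : Fin N → ℝ) i := by
    intro i
    obtain ⟨z, hz⟩ := (b.mem_span_iff_repr_mem ℤ _).mp hxmem i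
    exact ⟨z, by simpa [b, Pi.basisFun_repr] using hz⟩
  choose v hv using hcoord
  refine ⟨v, ?_, ?_⟩
  · intro hv0
    apply hx0
    have : (x : Fin N → ℝ) = 0 := by
      funext i
      rw [← hv i, hv0]
      simp
    exact Subtype.ext (by simpa using this)
  · intro j
    have hmem := hxs
    rw [hs, Set.mem_preimage, Matrix.toLin'_apply] at hmem
    have := hmem j (Set.mem_univ j)
    rw [Set.mem_Icc] at this
    have hfun : (fun i => (v i : ℝ)) = (x : Fin N → ℝ) := funext hv
    rw [hfun]
    exact abs_le.mpr this

noncomputable def M1mat {d : ℕ} (z : Fin d → ℝ) : Matrix (Fin (d+1)) (Fin (d+1)) ℝ :=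
  Matrix.of (Fin.cases (fun j => if j = 0 then (1:ℝ) else 0)
      (fun i' j => if j = 0 then z i' else if j = i'.succ then -1 else 0))

lemma det_M1 {d : ℕ} (z : Fin d → ℝ) : (M1mat z).det = (-1) ^ d := by
  have htri : (M1mat z).BlockTriangular OrderDual.toDual := by
    intro i j hij
    have hij' : i < j := hij
    induction i using Fin.cases with
    | zero =>
        show (if j = 0 then (1:ℝ) else 0) = 0
        rw [if_neg]
        exact (Fin.pos_iff_ne_zero.mp hij').symm ∘ Eq.symm
    | succ i' =>
        show (if j = 0 then z i' else if j = i'.succ then -1 else 0) = 0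
        rw [if_neg, if_neg]
        · exact fun h => absurd (h ▸ hij') (lt_irrefl _)
        · exact fun h => absurd (h ▸ hij') (by simp [Fin.pos_iff_ne_zero])
  rw [Matrix.det_of_lowerTriangular (M1mat z) htri]
  rw [Fin.prod_univ_succ]
  simp [M1mat, Fin.succ_ne_zero]

lemma M1_mulVec {d : ℕ} (z : Fin d → ℝ) (x : Fin (d+1) → ℝ) :
    (M1mat z).mulVec x = Fin.cons (x 0) (fun i => z i * x 0 - x i.succ) := by
  funext j
  induction j using Fin.cases with
  | zero =>
      show ∑ t, (if t = 0 then (1:ℝ) else 0) * x t = x 0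
      rw [Finset.sum_eq_single 0] <;> simp +contextual
  | succ i' =>
      show ∑ t, (if t = 0 then z i' else if t = i'.succ then -1 else 0) * x t = _
      rw [Fin.sum_univ_succ]
      rw [Finset.sum_eq_single i'] <;>
        simp +contextual [Fin.succ_ne_zero, Fin.succ_inj, sub_eq_add_neg]

lemma row_eq_sum_one {n : Type*} [Fintype n] [DecidableEq n] {R : Type*} [CommRing R]
    (c : n → R) : c = ∑ t, c t • (1 : Matrix n n R) t := by
  funext j
  simp [Matrix.one_apply, Finset.sum_apply]

lemma det_M2 {d : ℕ} (k : Fin d) (δ : ℝ) (ar : Fin d → ℝ) :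
    ((1 : Matrix (Fin (d+1)) (Fin (d+1)) ℝ).updateRow k.succ
      (Fin.cons (-δ) ar)).det = ar k := by
  rw [row_eq_sum_one (Fin.cons (-δ) ar), Matrix.det_updateRow_sum]
  simp

lemma M2_mulVec {d : ℕ} (k : Fin d) (δ : ℝ) (ar : Fin d → ℝ) (u : Fin (d+1) → ℝ)
    (j : Fin (d+1)) :
    ((1 : Matrix (Fin (d+1)) (Fin (d+1)) ℝ).updateRow k.succ (Fin.cons (-δ) ar)).mulVec u j
      = if j = k.succ then -δ * u 0 + ∑ i, ar i * u i.succ else u j := by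
  by_cases hj : j = k.succ
  · subst hj
    rw [if_pos rfl]
    show ∑ t, (Matrix.updateRow _ _ _ (Fin.succ k) t) * u t = _
    rw [Matrix.updateRow_self]
    rw [Fin.sum_univ_succ]
    simp
  · rw [if_neg hj]
    show ∑ t, (Matrix.updateRow _ _ _ j t) * u t = _
    rw [Matrix.updateRow_ne hj]
    rw [Finset.sum_eq_single j] <;> simp +contextual [Matrix.one_apply, eq_comm]

lemma core_transfer {d : ℕ} (hd1 : 1 ≤ d) (z : Fin d → ℝ) (a : Fin d → ℤ) (ha : a ≠ 0)
    (m : ℤ) (s Q A : ℝ) (hs0 : 0 < s) (hs1 : s < 1)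
    (hA : A = ‖(fun i => (a i : ℝ))‖)
    (hvol : A < Q * s ^ (d - 1) / 2) :
    ∃ q : ℕ, ∃ p : Fin d → ℤ, 0 < q ∧ (q : ℝ) ≤ Q ∧
      ∀ i, |(q:ℝ) * z i - (p i : ℝ)| ≤
        d * s + Q * |(∑ i, (a i : ℝ) * z i) - (m:ℝ)| / A := by
  classical
  -- the maximal coefficient
  obtain ⟨k, hk⟩ : ∃ k : Fin d, ∀ i, |(a i : ℝ)| ≤ |(a k : ℝ)| := by
    obtain ⟨k, _, hk⟩ := Finset.exists_max_image univ (fun i => |(a i : ℝ)|) ⟨⟨0, hd1⟩, mem_univ _⟩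
    exact ⟨k, fun i => hk i (mem_univ i)⟩
  have hAk : A = |(a k : ℝ)| := by
    apply le_antisymm
    · rw [hA]
      apply pi_norm_le_iff_of_nonneg (abs_nonneg _) |>.mpr
      intro i; rw [Real.norm_eq_abs]; exact hk i
    · rw [hA]
      have := norm_le_pi_norm (fun i => (a i : ℝ)) k
      rwa [Real.norm_eq_abs] at this
  have hA1 : 1 ≤ A := by
    obtain ⟨i, hi⟩ := Function.ne_iff.mp ha
    calc (1:ℝ) ≤ |(a i : ℝ)| := by
          have : 1 ≤ |a i| := Int.one_le_abs hi
          calc (1:ℝ) ≤ (|a i| : ℝ) := by exact_mod_cast this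
            _ = |(a i : ℝ)| := by push_cast; ring
      _ ≤ |(a k : ℝ)| := hk i
      _ = A := hAk.symm
  have hA0 : 0 < A := lt_of_lt_of_le one_pos hA1
  have hak : (a k : ℝ) ≠ 0 := by
    intro h
    rw [hAk, h, abs_zero] at hA1
    linarith
  have hQ0 : 0 < Q := by
    nlinarith [pow_pos hs0 (d-1), hA0]
  set δ : ℝ := (∑ i, (a i : ℝ) * z i) - (m:ℝ) with hδ
  set ar : Fin d → ℝ := fun i => (a i : ℝ) with har
  set M2 : Matrix (Fin (d+1)) (Fin (d+1)) ℝ :=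
    (1 : Matrix (Fin (d+1)) (Fin (d+1)) ℝ).updateRow k.succ (Fin.cons (-δ) ar) with hM2
  set M : Matrix (Fin (d+1)) (Fin (d+1)) ℝ := M2 * M1mat z with hM
  have hdet : M.det = ar k * (-1) ^ d := by
    rw [hM, Matrix.det_mul, det_M2, det_M1]
  have hdetne : M.det ≠ 0 := by
    rw [hdet]
    apply mul_ne_zero hak
    positivity
  have hdetabs : |M.det| = A := by
    rw [hdet, abs_mul, abs_pow, abs_neg, abs_one, one_pow, mul_one, hAk]
  set c : Fin (d+1) → ℝ := fun j => if j = 0 then Q else if j = k.succ then 1/2 else s with hc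
  have hcpos : ∀ j, 0 < c j := by
    intro j
    rw [hc]
    dsimp only
    split_ifs
    · exact hQ0
    · norm_num
    · exact hs0
  have hcprod : ∏ j, c j = Q * (1/2 * s ^ (d-1)) := by
    rw [Fin.prod_univ_succ]
    have h0 : c 0 = Q := by simp [hc]
    have hstep : ∀ i : Fin d, c i.succ = if i = k then (1/2:ℝ) else s := by
      intro i
      simp only [hc]
      rw [if_neg (Fin.succ_ne_zero i)]
      by_cases h : i = k
      · subst h; rw [if_pos rfl, if_pos rfl]
      · rw [if_neg (by simpa [Fin.succ_inj] using h), if_neg h]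
    rw [h0, Finset.prod_congr rfl (fun i _ => hstep i)]
    congr 1
    rw [← Finset.mul_prod_erase univ _ (mem_univ k), if_pos rfl]
    congr 1
    rw [Finset.prod_congr rfl (fun i hi => if_neg (Finset.ne_of_mem_erase hi))]
    rw [Finset.prod_const, Finset.card_erase_of_mem (mem_univ k), Finset.card_univ,
      Fintype.card_fin]
  have hvol' : |M.det| < ∏ j, c j := by
    rw [hdetabs, hcprod]
    calc A < Q * s ^ (d-1) / 2 := hvol
      _ = Q * (1/2 * s ^ (d-1)) := by ring
  obtain ⟨v, hv0, hvb⟩ := minkowski_forms M hdetne c hcpos hvol'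
  set vr : Fin (d+1) → ℝ := fun i => (v i : ℝ) with hvr
  have hw : ∀ j, M.mulVec vr j =
      if j = k.succ then -δ * vr 0 + ∑ i, ar i * (z i * vr 0 - vr i.succ)
      else (Fin.cons (vr 0) (fun i => z i * vr 0 - vr i.succ) : Fin (d+1) → ℝ) j := by
    intro j
    rw [hM, ← Matrix.mulVec_mulVec, M1_mulVec, M2_mulVec]
    simp [Fin.cons_zero, Fin.cons_succ]
  -- bound on v 0
  have hb0 : |vr 0| ≤ Q := by
    have := hvb 0
    rw [hw 0, if_neg (Ne.symm (Fin.succ_ne_zero k))] at this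
    simpa [hc] using this
  -- bounds on coordinates i ≠ k
  have hbi : ∀ i : Fin d, i ≠ k → |z i * vr 0 - vr i.succ| ≤ s := by
    intro i hik
    have := hvb i.succ
    rw [hw i.succ, if_neg (by simp [Fin.succ_inj, hik])] at this
    simp only [Fin.cons_succ] at this
    rw [hc] at this
    simpa [Fin.succ_ne_zero, Fin.succ_inj, hik] using this
  -- the integer relation
  have hbk : |-δ * vr 0 + ∑ i, ar i * (z i * vr 0 - vr i.succ)| ≤ 1/2 := by
    have := hvb k.succ
    rw [hw k.succ, if_pos rfl] at this
    simpa [hc, Fin.succ_ne_zero] using this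
  set e : ℤ := m * v 0 - ∑ i, a i * v i.succ with he
  have hkey : ∑ i, ar i * (z i * vr 0 - vr i.succ) = vr 0 * δ + (e:ℝ) := by
    have h1 : ∑ i, ar i * (z i * vr 0 - vr i.succ)
        = (∑ i, ar i * z i) * vr 0 - ∑ i, ar i * vr i.succ := by
      rw [Finset.sum_mul, ← Finset.sum_sub_distrib]
      congr 1; ext i; ring
    rw [h1, hδ, he]
    push_cast
    ring
  have hE0 : -δ * vr 0 + ∑ i, ar i * (z i * vr 0 - vr i.succ) = (e:ℝ) := by
    rw [hkey]; ring
  have he0 : e = 0 := by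
    rw [hE0] at hbk
    by_contra h
    have h1 : (1:ℝ) ≤ |(e:ℝ)| := by
      have := Int.one_le_abs h
      calc (1:ℝ) ≤ (|e| : ℝ) := by exact_mod_cast this
        _ = |(e:ℝ)| := by push_cast; ring
    linarith
  -- sum identity without e
  have hsum : ∑ i, ar i * (z i * vr 0 - vr i.succ) = vr 0 * δ := by
    rw [hkey, he0]; simp
  -- bound on the k-th coordinate
  have hbk' : |z k * vr 0 - vr k.succ| ≤ (d-1) * s + Q * |δ| / A := by
    have hsplit : ar k * (z k * vr 0 - vr k.succ)
        = vr 0 * δ - ∑ i ∈ univ.erase k, ar i * (z i * vr 0 - vr i.succ) := by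
      rw [← hsum, ← Finset.add_sum_erase univ _ (mem_univ k)]
      ring
    have herase : |∑ i ∈ univ.erase k, ar i * (z i * vr 0 - vr i.succ)| ≤ (d-1) * (A * s) := by
      calc |∑ i ∈ univ.erase k, ar i * (z i * vr 0 - vr i.succ)|
          ≤ ∑ i ∈ univ.erase k, |ar i * (z i * vr 0 - vr i.succ)| := Finset.abs_sum_le_sum_abs _ _
        _ ≤ ∑ i ∈ univ.erase k, A * s := by
            apply Finset.sum_le_sum
            intro i hi
            rw [abs_mul]
            apply _root_.mul_le_mul
            · rw [hAk]; exact hk i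
            · exact hbi i (Finset.ne_of_mem_erase hi)
            · exact abs_nonneg _
            · exact le_of_lt hA0
        _ = (d-1) * (A * s) := by
            rw [Finset.sum_const, Finset.card_erase_of_mem (mem_univ k), Finset.card_univ,
              Fintype.card_fin, nsmul_eq_mul]
            congr 1
            have : (1:ℝ) ≤ (d:ℝ) := by exact_mod_cast hd1
            push_cast [Nat.cast_sub hd1]
            ring
    have habs : |ar k| * |z k * vr 0 - vr k.succ| ≤ Q * |δ| + (d-1)*(A*s) := by
      rw [← abs_mul, hsplit]
      calc |vr 0 * δ - ∑ i ∈ univ.erase k, ar i * (z i * vr 0 - vr i.succ)|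
          ≤ |vr 0 * δ| + |∑ i ∈ univ.erase k, ar i * (z i * vr 0 - vr i.succ)| := abs_sub _ _
        _ ≤ Q * |δ| + (d-1)*(A*s) := by
            apply add_le_add _ herase
            rw [abs_mul]
            apply _root_.mul_le_mul_of_nonneg_right hb0 (abs_nonneg _)
    rw [← hAk] at habs
    calc |z k * vr 0 - vr k.succ| = A * |z k * vr 0 - vr k.succ| / A := by
          field_simp
      _ ≤ (Q * |δ| + ((d:ℝ)-1)*(A*s)) / A := by
          gcongr
      _ = ((d:ℝ)-1) * s + Q * |δ| / A := by field_simp; ring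
  -- v 0 ≠ 0
  have hvne : v 0 ≠ 0 := by
    intro h0
    apply hv0
    have hzero : ∀ i : Fin d, v i.succ = 0 := by
      -- first the i ≠ k
      have hik : ∀ i : Fin d, i ≠ k → v i.succ = 0 := by
        intro i hik
        have := hbi i hik
        rw [hvr] at this
        simp only [h0, Int.cast_zero, mul_zero, zero_sub, abs_neg] at this
        have h1 : |(v i.succ : ℝ)| < 1 := lt_of_le_of_lt this hs1
        by_contra hne
        have : (1:ℝ) ≤ |(v i.succ : ℝ)| := by
          have := Int.one_le_abs hne
          calc (1:ℝ) ≤ (|v i.succ| : ℝ) := by exact_mod_cast this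
            _ = |(v i.succ : ℝ)| := by push_cast; ring
        linarith
      -- then k from e = 0
      intro i
      by_cases hikk : i = k
      · have hak' : a k ≠ 0 := by exact_mod_cast hak
        have hS : ∑ j, a j * v j.succ = 0 := by
          have h1 : m * v 0 - ∑ j, a j * v j.succ = 0 := by rw [← he, he0]
          rw [h0, mul_zero, zero_sub, neg_eq_zero] at h1
          exact h1
        have hsum0 : ∑ j, a j * v j.succ = a k * v k.succ :=
          Finset.sum_eq_single_of_mem k (mem_univ k) (fun b _ hb => by rw [hik b hb, mul_zero])
        rw [hsum0] at hS
        rw [hikk]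
        exact (mul_eq_zero.mp hS).resolve_left hak'
      · exact hik i hikk
    funext j
    induction j using Fin.cases with
    | zero => exact h0
    | succ i' => exact hzero i'
  -- uniform bound
  have huni : ∀ i, |z i * vr 0 - vr i.succ| ≤ d * s + Q * |δ| / A := by
    intro i
    have hnn : (0:ℝ) ≤ Q * |δ| / A := by positivity
    have hd1r : (1:ℝ) ≤ (d:ℝ) := by exact_mod_cast hd1
    by_cases hik : i = k
    · calc |z i * vr 0 - vr i.succ| = |z k * vr 0 - vr k.succ| := by rw [hik]
        _ ≤ ((d:ℝ)-1) * s + Q * |δ| / A := hbk'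
        _ ≤ d * s + Q * |δ| / A := by nlinarith
    · calc |z i * vr 0 - vr i.succ| ≤ s := hbi i hik
        _ ≤ d * s + Q * |δ| / A := by nlinarith
  rcases lt_or_gt_of_ne hvne with hneg | hpos
  · refine ⟨(-(v 0)).toNat, fun i => -(v i.succ), by omega, ?_, ?_⟩
    · have hq : (((-(v 0)).toNat : ℤ) : ℝ) = -(vr 0) := by
        rw [Int.toNat_of_nonneg (by omega)]
        push_cast
        ring
      rw [show (((-(v 0)).toNat : ℕ) : ℝ) = (((-(v 0)).toNat : ℤ) : ℝ) by push_cast; ring, hq]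
      calc -(vr 0) ≤ |vr 0| := by
            rw [abs_eq_max_neg]; exact le_max_right _ _
        _ ≤ Q := hb0
    · intro i
      have hq : (((-(v 0)).toNat : ℕ) : ℝ) = -(vr 0) := by
        have : (((-(v 0)).toNat : ℤ) : ℝ) = -(vr 0) := by
          rw [Int.toNat_of_nonneg (by omega)]; push_cast; ring
        exact_mod_cast this
      have hrw : (((-(v 0)).toNat : ℕ) : ℝ) * z i - ((-(v i.succ) : ℤ) : ℝ)
          = -(z i * vr 0 - vr i.succ) := by
        rw [hq]; push_cast; ring
      rw [hrw, abs_neg]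
      exact huni i
  · refine ⟨(v 0).toNat, fun i => v i.succ, by omega, ?_, ?_⟩
    · have hq : (((v 0).toNat : ℕ) : ℝ) = vr 0 := by
        have : (((v 0).toNat : ℤ) : ℝ) = vr 0 := by
          rw [Int.toNat_of_nonneg (by omega)]
        exact_mod_cast this
      rw [hq]
      exact le_trans (le_abs_self _) hb0
    · intro i
      have hq : (((v 0).toNat : ℕ) : ℝ) = vr 0 := by
        have : (((v 0).toNat : ℤ) : ℝ) = vr 0 := by
          rw [Int.toNat_of_nonneg (by omega)]
        exact_mod_cast this
      have hrw : (((v 0).toNat : ℕ) : ℝ) * z i - ((v i.succ : ℤ) : ℝ)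
          = z i * vr 0 - vr i.succ := by
        rw [hq]; ring
      rw [hrw]
      exact huni i

theorem stmt_6 (l d : ℕ) (hd : d = l + 1) (hd2 : 2 ≤ d) (x : Fin l → ℝ)
    (htype : (d : ℝ≥0∞) < tauD x) :
    ∀ y : ℝ, ∃ ε : ℝ, 0 < ε ∧
      {q : ℕ | 0 < q ∧
        distInt (fun i : Fin (l + 1) => (q : ℝ) * (Fin.snoc x y : Fin (l + 1) → ℝ) i) <
          (q : ℝ) ^ (-(1 / d : ℝ) - ε)}.Infinite := by
  subst hd
  intro y
  set D : ℝ := ((l + 1 : ℕ) : ℝ) with hDdef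
  have hD2 : 2 ≤ D := by
    show (2:ℝ) ≤ ((l + 1 : ℕ) : ℝ)
    exact_mod_cast hd2
  have hDl : D = (l:ℝ) + 1 := by rw [hDdef]; push_cast; ring
  have hD0 : 0 < D := by linarith
  -- extract τ
  obtain ⟨τ, hmem, hτD⟩ :
      ∃ τ : ℝ, (0 < τ ∧
        {n : Fin l → ℤ | n ≠ 0 ∧
          distZ (∑ i, (n i : ℝ) * x i) < ‖fun i => ((n i : ℝ))‖ ^ (-τ)}.Infinite) ∧
        D < τ := by
    rw [tauD, lt_iSup_iff] at htype
    obtain ⟨τ, hτ⟩ := htype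
    rw [lt_iSup_iff] at hτ
    obtain ⟨hmem, hτ⟩ := hτ
    refine ⟨τ, hmem, ?_⟩
    have h1 : ENNReal.ofReal ((l + 1 : ℕ) : ℝ) < ENNReal.ofReal τ := by
      rwa [ENNReal.ofReal_natCast]
    exact (ENNReal.ofReal_lt_ofReal_iff_of_nonneg (by positivity)).mp h1
  obtain ⟨hτ0, hinf⟩ := hmem
  set I := {n : Fin l → ℤ | n ≠ 0 ∧
      distZ (∑ i, (n i : ℝ) * x i) < ‖fun i => ((n i : ℝ))‖ ^ (-τ)} with hI
  -- exponents
  set G : ℝ := D + (l:ℝ) * τ with hG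
  have hG0 : 0 < G := by positivity
  set e : ℝ := τ / G with he
  have hee : 1/D < e := by
    rw [he, div_lt_div_iff₀ hD0 hG0, hG, hDl]
    nlinarith
  set ε : ℝ := (e - 1/D)/2 with hε
  have hε0 : 0 < ε := by rw [hε]; linarith
  refine ⟨ε, hε0, ?_⟩
  set α : ℝ := 1/D + ε with hα
  have hαe : α = e - ε := by rw [hα, hε]; ring
  have hα0 : 0 < α := by rw [hα]; positivity
  have hge : (1 + (τ/D) * l) * e = τ / D := by
    rw [he, hG]
    field_simp
  set z : Fin (l+1) → ℝ := (Fin.snoc x y : Fin (l+1) → ℝ) with hz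
  have hexp : -(1/D) - ε = -α := by rw [hα]; ring
  -- suffices unbounded
  suffices hgt : ∀ M : ℕ, ∃ q : ℕ, (0 < q ∧
      distInt (fun i : Fin (l + 1) => (q : ℝ) * z i) < (q : ℝ) ^ (-(1 / D) - ε)) ∧ M < q by
    by_contra hfin
    rw [Set.not_infinite] at hfin
    obtain ⟨M, hM⟩ := hfin.bddAbove
    obtain ⟨q, hq, hqM⟩ := hgt M
    exact absurd (hM hq) (not_le.mpr hqM)
  by_cases hrat : ∃ q : ℕ, 0 < q ∧ distInt (fun i => (q:ℝ) * z i) = 0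
  · -- rational case
    obtain ⟨q0, hq00, hq0z⟩ := hrat
    have hint : ∀ i, ∃ m : ℤ, (q0:ℝ) * z i = m := by
      intro i
      apply distZ_eq_zero
      have h1 := distZ_le_distInt (fun i => (q0:ℝ) * z i) i
      rw [hq0z] at h1
      have h2 : 0 ≤ distZ ((q0:ℝ) * z i) :=
        Real.iInf_nonneg fun _ => abs_nonneg _
      linarith
    choose w hw using hint
    intro M
    refine ⟨(M+1) * q0, ⟨by positivity, ?_⟩, ?_⟩
    · have hzero : distInt (fun i : Fin (l+1) => (((M+1) * q0 : ℕ):ℝ) * z i) ≤ 0 := by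
        have h3 := distInt_le (fun i : Fin (l+1) => (((M+1) * q0 : ℕ):ℝ) * z i)
          (fun i => (M+1 : ℤ) * w i)
        have h4 : (fun i : Fin (l+1) => (((M+1) * q0 : ℕ):ℝ) * z i)
            - (fun i => (((M+1 : ℤ) * w i : ℤ) : ℝ)) = 0 := by
          funext i
          have := hw i
          push_cast
          simp only [Pi.sub_apply, Pi.zero_apply]
          push_cast
          nlinarith [hw i]
        rw [h4, norm_zero] at h3
        exact h3
      have hpow : (0:ℝ) < ((((M+1) * q0 : ℕ)):ℝ) ^ (-(1 / D) - ε) := by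
        apply Real.rpow_pos_of_pos
        positivity
      exact lt_of_le_of_lt hzero hpow
    · have : 1 ≤ q0 := hq00
      calc M < M + 1 := Nat.lt_succ_self M
        _ ≤ (M+1) * q0 := Nat.le_mul_of_pos_right _ hq00
  · -- irrational case
    push_neg at hrat
    have hpos : ∀ q : ℕ, 0 < q → 0 < distInt (fun i => (q:ℝ) * z i) := by
      intro q hq
      rcases lt_or_eq_of_le (distInt_nonneg (fun i => (q:ℝ) * z i)) with h | h
      · exact h
      · exact absurd h.symm (hrat q hq)
    intro M
    set C : ℝ := (D + 3) * 3 ^ e with hC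
    have h3e : (0:ℝ) < 3 ^ e := Real.rpow_pos_of_pos (by norm_num) e
    have hC0 : 0 < C := by rw [hC]; positivity
    obtain ⟨M1, hM1⟩ := exists_nat_ge (C ^ (1/ε))
    set M0 : ℕ := max (max M M1) 1 with hM0
    have hM01 : 1 ≤ M0 := le_max_right _ _
    have hne : (Finset.Icc 1 M0).Nonempty := ⟨1, by simp [hM01]⟩
    set ρ : ℝ := (Finset.Icc 1 M0).inf' hne
      (fun q => distInt (fun i => (q:ℝ) * z i)) with hρ
    have hρ0 : 0 < ρ := by
      rw [hρ, Finset.lt_inf'_iff]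
      intro q hq
      rw [Finset.mem_Icc] at hq
      exact hpos q hq.1
    -- choose big n
    obtain ⟨n, hnI, hnA⟩ : ∃ n ∈ I, max 2 ((D+3)/ρ + 1) < ‖fun i => ((n i : ℝ))‖ := by
      by_contra hcon
      push_neg at hcon
      exact hinf (Set.Finite.subset
        (bounded_int_finite l (max 2 ((D+3)/ρ + 1))) (fun n hn => hcon n hn))
    obtain ⟨hn0, hnapp⟩ := hnI
    set A : ℝ := ‖fun i => ((n i : ℝ))‖ with hA
    have hA2 : 2 < A := lt_of_le_of_lt (le_max_left _ _) hnA
    have hA1 : 1 < A := by linarith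
    have hA0 : 0 < A := by linarith
    have hAρ : (D+3)/ρ < A := by
      have := lt_of_le_of_lt (le_max_right (2:ℝ) _) hnA
      linarith
    -- m
    obtain ⟨m, hm⟩ : ∃ m : ℤ, |(∑ i, (n i : ℝ) * x i) - (m:ℝ)| < A ^ (-τ) := by
      have h5 : distZ (∑ i, (n i : ℝ) * x i) < A ^ (-τ) := hnapp
      rw [distZ] at h5
      exact exists_lt_of_ciInf_lt h5
    set a : Fin (l+1) → ℤ := (Fin.snoc n (0:ℤ) : Fin (l+1) → ℤ) with ha
    have haz : (∑ i : Fin (l+1), (a i : ℝ) * z i) = ∑ i, (n i:ℝ) * x i := snoc_sum l n x y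
    have hanorm : A = ‖(fun i : Fin (l+1) => ((a i : ℝ)))‖ := by
      rw [hA, ha, snoc_norm]
    have hane : a ≠ 0 := by
      intro h
      apply hn0
      funext i
      have : a i.castSucc = 0 := by rw [h]; rfl
      rwa [ha, Fin.snoc_castSucc] at this
    -- parameters
    set s : ℝ := A ^ (-(τ/D)) with hs
    have hs0 : 0 < s := Real.rpow_pos_of_pos hA0 _
    have hvD : 0 < τ / D := by positivity
    have hs1 : s < 1 := Real.rpow_lt_one_of_one_lt_of_neg hA1 (neg_neg_of_pos hvD)
    have hsl : s ^ l = A ^ (-(τ/D) * (l:ℝ)) := by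
      rw [hs, ← Real.rpow_natCast (A ^ (-(τ/D))) l, ← Real.rpow_mul hA0.le]
    have hsl0 : 0 < s ^ l := pow_pos hs0 l
    set Q : ℝ := 3 * A / s ^ l with hQdef
    have hQ0 : 0 < Q := by positivity
    have hQs : Q * s ^ l = 3 * A := by
      rw [hQdef]; field_simp
    have hvol : A < Q * s ^ ((l+1) - 1) / 2 := by
      have hll : (l + 1) - 1 = l := rfl
      rw [hll, hQs]
      linarith
    obtain ⟨q, p, hq0, hqQ, hqb⟩ := core_transfer (d := l+1) (by omega) z a hane m s Q A
      hs0 hs1 hanorm (hanorm ▸ hvol)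
    -- the delta bound
    have hδ : |(∑ i : Fin (l+1), (a i : ℝ) * z i) - (m:ℝ)| < A ^ (-τ) := by
      rw [haz]; exact hm
    -- Q as a power of A
    have hQ' : Q = 3 * A ^ (1 - (-(τ/D) * (l:ℝ))) := by
      rw [hQdef, hsl, Real.rpow_sub hA0, Real.rpow_one]
      ring
    have hQA2 : Q * A ^ (-τ) / A = 3 * s := by
      rw [hQ', hs]
      rw [mul_assoc, ← Real.rpow_add hA0]
      rw [div_eq_iff (ne_of_gt hA0)]
      rw [mul_assoc]
      congr 1
      have h30 : A ^ (-(τ/D)) * A = A ^ (-(τ/D)) * A ^ (1:ℝ) := by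
        rw [Real.rpow_one]
      rw [h30, ← Real.rpow_add hA0]
      congr 1
      have hDne : D ≠ 0 := ne_of_gt hD0
      field_simp
      rw [hDl]
      ring
    have hQA : Q * |(∑ i : Fin (l+1), (a i : ℝ) * z i) - (m:ℝ)| / A < 3 * s := by
      calc Q * |(∑ i : Fin (l+1), (a i : ℝ) * z i) - (m:ℝ)| / A
          < Q * A ^ (-τ) / A := by
            have h20 := mul_lt_mul_of_pos_left hδ hQ0
            have h21 := mul_lt_mul_of_pos_right h20 (inv_pos.mpr hA0)
            simpa [div_eq_mul_inv] using h21
        _ = 3 * s := hQA2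
    -- distInt bound
    have hqb' : ∀ i, |(q:ℝ) * z i - (p i : ℝ)| ≤
        D * s + Q * |(∑ i : Fin (l+1), (a i : ℝ) * z i) - (m:ℝ)| / A := fun i => hqb i
    have hdist : distInt (fun i => (q:ℝ) * z i) < (D + 3) * s := by
      have h6 := distInt_le (fun i => (q:ℝ) * z i) p
      have h7 : ‖(fun i => (q:ℝ) * z i) - fun i => (p i : ℝ)‖ ≤
          D * s + Q * |(∑ i : Fin (l+1), (a i : ℝ) * z i) - (m:ℝ)| / A := by
        apply pi_norm_le_iff_of_nonneg (by positivity) |>.mpr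
        intro i
        rw [Pi.sub_apply, Real.norm_eq_abs]
        exact hqb' i
      calc distInt (fun i => (q:ℝ) * z i)
          ≤ D * s + Q * |(∑ i : Fin (l+1), (a i : ℝ) * z i) - (m:ℝ)| / A := h6.trans h7
        _ < D * s + 3 * s := by linarith
        _ = (D + 3) * s := by ring
    -- rho trick
    have hsA : s ≤ A⁻¹ := by
      rw [hs]
      calc A ^ (-(τ/D)) ≤ A ^ (-1:ℝ) := by
            apply Real.rpow_le_rpow_of_exponent_le hA1.le
            have : 1 ≤ τ / D := (one_le_div hD0).mpr (le_of_lt hτD)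
            linarith
        _ = A⁻¹ := by
            rw [Real.rpow_neg_one]
    have hρbig : (D + 3) * s < ρ := by
      have h8 : (D + 3) * s ≤ (D + 3) * A⁻¹ := by
        apply mul_le_mul_of_nonneg_left hsA (by linarith)
      have h9 : (D + 3) * A⁻¹ < ρ := by
        rw [← div_eq_mul_inv, div_lt_iff₀ hA0]
        rw [div_lt_iff₀ hρ0] at hAρ
        linarith [hAρ]
      linarith
    have hdistρ : distInt (fun i => (q:ℝ) * z i) < ρ := lt_trans hdist hρbig
    have hqM0 : M0 < q := by
      by_contra hle
      push_neg at hle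
      have h10 : ρ ≤ distInt (fun i => (q:ℝ) * z i) := by
        rw [hρ]
        exact Finset.inf'_le _ (Finset.mem_Icc.mpr ⟨hq0, hle⟩)
      linarith
    have hMM0 : M ≤ M0 := le_trans (le_max_left M M1) (le_max_left _ 1)
    have hM1M0 : M1 ≤ M0 := le_trans (le_max_right M M1) (le_max_left _ 1)
    have hqM : M < q := lt_of_le_of_lt hMM0 hqM0
    have hqM1 : (M1:ℝ) < (q:ℝ) := by exact_mod_cast lt_of_le_of_lt hM1M0 hqM0
    have hqR0 : (0:ℝ) < (q:ℝ) := by exact_mod_cast hq0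
    have he0 : 0 < e := by rw [he]; positivity
    -- s in terms of q
    have hg0 : (0:ℝ) ≤ 1 - (-(τ/D) * (l:ℝ)) := by
      have : (0:ℝ) ≤ (τ/D) * (l:ℝ) := by positivity
      linarith
    have hsQe : s = (Q/3) ^ (-e) := by
      rw [hQ', hs]
      have h11 : (3:ℝ) * A ^ (1 - (-(τ/D) * (l:ℝ))) / 3 = A ^ (1 - (-(τ/D) * (l:ℝ))) := by
        ring
      rw [h11, ← Real.rpow_mul hA0.le]
      congr 1
      rw [show (1 - (-(τ/D) * (l:ℝ))) = 1 + τ/D * (l:ℝ) by ring, mul_neg, hge]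
    have hq3 : (q:ℝ)/3 ≤ Q/3 := by linarith
    have hsq : s ≤ 3 ^ e * (q:ℝ) ^ (-e) := by
      rw [hsQe]
      calc (Q/3) ^ (-e) ≤ ((q:ℝ)/3) ^ (-e) :=
            Real.rpow_le_rpow_of_nonpos (by positivity) hq3 (neg_nonpos_of_nonneg he0.le)
        _ = 3 ^ e * (q:ℝ) ^ (-e) := by
            rw [Real.div_rpow hqR0.le (by norm_num), Real.rpow_neg (by norm_num : (0:ℝ) ≤ 3)]
            field_simp
    have hCq : C < (q:ℝ) ^ ε := by
      have h12 : C ^ (1/ε) < (q:ℝ) := lt_of_le_of_lt hM1 hqM1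
      have h13 : (C ^ (1/ε)) ^ ε < (q:ℝ) ^ ε :=
        Real.rpow_lt_rpow (Real.rpow_nonneg hC0.le _) h12 hε0
      rwa [← Real.rpow_mul hC0.le, one_div_mul_cancel (ne_of_gt hε0), Real.rpow_one] at h13
    refine ⟨q, ⟨hq0, ?_⟩, hqM⟩
    rw [hexp]
    calc distInt (fun i => (q:ℝ) * z i) < (D+3) * s := hdist
      _ ≤ (D+3) * (3 ^ e * (q:ℝ) ^ (-e)) := by
          apply mul_le_mul_of_nonneg_left hsq (by linarith)
      _ = C * (q:ℝ) ^ (-e) := by rw [hC]; ring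
      _ < (q:ℝ) ^ ε * (q:ℝ) ^ (-e) :=
          mul_lt_mul_of_pos_right hCq (Real.rpow_pos_of_pos hqR0 _)
      _ = (q:ℝ) ^ (-α) := by
          rw [← Real.rpow_add hqR0]
          congr 1
          rw [hαe]
          ring
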